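/- For every integer n ≥ 1, S(n) ≤ (3/8) · τ(n)² · log n, where S(n) := ∑_{i=1}^{τ(n)} (i − 1) · log d_i and 1 = d_1 < d_2 < ⋯ < d_{τ(n)} = n are the positive divisors of n in increasing order. -/

import Mathlib

open Finset
open scoped Classical

noncomputable section

/-- Number of positive divisors of `n`. -/
def tau (n : ℕ) : ℕ := n.divisors.card

/-- The positive divisors of `n` in increasing order. -/
def sortedDivisors (n : ℕ) : List ℕ := n.divisors.sort (· ≤ ·)

/-- The `i`-th divisor of `n` (1-based): `dvs n 1 = 1`, ..., `dvs n (tau n) = n`. -/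
def dvs (n i : ℕ) : ℕ := (sortedDivisors n).getD (i - 1) 0

/-- `S(n) = ∑_{i=1}^{τ(n)} (i-1) log d_i`. -/
noncomputable def Sfun (n : ℕ) : ℝ :=
  ∑ i ∈ Finset.Icc 1 (tau n), ((i : ℝ) - 1) * Real.log (dvs n i)

/-- `V(n) = ∏_{1 ≤ i < j ≤ τ(n)} (d_j - d_i)`. -/
noncomputable def Vfun (n : ℕ) : ℝ :=
  ∏ j ∈ Finset.Icc 1 (tau n), ∏ i ∈ Finset.Ico 1 j, ((dvs n j : ℝ) - (dvs n i : ℝ))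

/-- `Ω₂(n) = ∑_{p^α ∥ n} α²`. -/
def Omega2 (n : ℕ) : ℕ := ∑ p ∈ n.primeFactors, (n.factorization p) ^ 2

/-- The sorted divisor list equals the reverse of its image under `n / ·`. -/
lemma sorted_eq_rev (n : ℕ) (hn : n ≠ 0) :
    sortedDivisors n = ((sortedDivisors n).map (fun d => n / d)).reverse := by
  have hinj : Set.InjOn (fun d => n / d) (n.divisors : Set ℕ) := by
    intro a ha b hb hab
    simp only [Finset.coe_mem, Finset.mem_coe, Nat.mem_divisors] at ha hb
    have h1 : n / (n / a) = a := Nat.div_div_self ha.1 hn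
    have h2 : n / (n / b) = b := Nat.div_div_self hb.1 hn
    simp only at hab
    rw [← h1, ← h2, hab]
  have hmult : Multiset.map (fun d => n / d) (n.divisors.val) = n.divisors.val := by
    rw [← Finset.image_val_of_injOn hinj, Nat.image_div_divisors_eq_divisors]
  have hperm : List.Perm (((sortedDivisors n).map (fun d => n / d)).reverse) (sortedDivisors n) := by
    refine (List.reverse_perm _).trans ?_
    have hcoe : (↑(sortedDivisors n) : Multiset ℕ) = n.divisors.val := Finset.sort_eq _ _
    apply Multiset.coe_eq_coe.mp
    rw [← Multiset.map_coe, hcoe, hmult]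
  have hP : (sortedDivisors n).Pairwise (fun a b => n / b ≤ n / a) := by
    refine List.Pairwise.imp_of_mem ?_ (List.sortedLT_iff_pairwise.mp (Finset.sortedLT_sort n.divisors))
    intro a b ha hb hab
    have hpa : 0 < a := Nat.pos_of_mem_divisors ((Finset.mem_sort _).mp ha)
    exact Nat.div_le_div_left (le_of_lt hab) hpa
  have hs2 : (((sortedDivisors n).map (fun d => n / d)).reverse).Pairwise (· ≤ ·) := by
    rw [List.pairwise_reverse, List.pairwise_map]
    exact hP
  exact (List.Perm.eq_of_pairwise' hs2 (Finset.pairwise_sort _ _) hperm).symm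

lemma dvs_mem_divisors (n : ℕ) {i : ℕ} (h1 : 1 ≤ i) (h2 : i ≤ tau n) :
    dvs n i ∈ n.divisors := by
  have hlen : (sortedDivisors n).length = tau n := Finset.length_sort _
  have hlt : i - 1 < (sortedDivisors n).length := by omega
  rw [dvs, List.getD_eq_getElem _ _ hlt]
  exact (Finset.mem_sort _).mp (List.getElem_mem hlt)

lemma dvs_pair (n : ℕ) (hn : n ≠ 0) {i : ℕ} (hi : i < tau n) :
    dvs n (i + 1) = n / dvs n (tau n - i) := by
  have hlen : (sortedDivisors n).length = tau n := Finset.length_sort _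
  have heq := sorted_eq_rev n hn
  have hlt : i < (sortedDivisors n).length := by omega
  have hlt2 : tau n - i - 1 < (sortedDivisors n).length := by omega
  rw [dvs, dvs]
  have e1 : i + 1 - 1 = i := by omega
  rw [e1, List.getD_eq_getElem _ _ hlt, List.getD_eq_getElem _ _ hlt2]
  have hrl : i < (((sortedDivisors n).map (fun d => n / d)).reverse).length := by
    simpa using hlt
  rw [List.getElem_of_eq heq hlt, List.getElem_reverse, List.getElem_map]
  simp only [List.length_map, hlen]
  have hidx : tau n - 1 - i = tau n - i - 1 := by omega
  simp only [hidx]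

lemma aux_sum : ∀ K : ℕ, 4 * (∑ i ∈ Finset.range K, (2 * i + 1 - K)) ≤ K ^ 2 + 2 * K := by
  intro K
  induction K using Nat.strong_induction_on with
  | _ K ih =>
    match K with
    | 0 => simp
    | 1 => simp
    | (k + 2) =>
      have h1 : ∑ i ∈ Finset.range (k + 2), (2 * i + 1 - (k + 2))
          = (∑ i ∈ Finset.range (k + 1), (2 * (i + 1) + 1 - (k + 2))) + (2 * 0 + 1 - (k + 2)) :=
        Finset.sum_range_succ' _ _
      have h2 : ∀ i : ℕ, 2 * (i + 1) + 1 - (k + 2) = 2 * i + 1 - k := by intro i; omega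
      have h3 : ∑ i ∈ Finset.range (k + 1), (2 * i + 1 - k)
          = (∑ i ∈ Finset.range k, (2 * i + 1 - k)) + (2 * k + 1 - k) :=
        Finset.sum_range_succ _ _
      have ihk := ih k (by omega)
      simp only [h2] at h1
      have h4 : 2 * 0 + 1 - (k + 2) = 0 := by omega
      have e5 : 2 * k + 1 - k = k + 1 := by omega
      have e6 : (k + 2) ^ 2 = k ^ 2 + 4 * k + 4 := by ring
      rw [h1, h3, h4, e5, e6]
      linarith [ihk]

theorem S_upper (n : ℕ) (hn : 1 ≤ n) :
    Sfun n ≤ 3 / 8 * (tau n : ℝ) ^ 2 * Real.log n := by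
  have hn0 : n ≠ 0 := by omega
  set K := tau n with hKdef
  set G : ℕ → ℝ := fun i => Real.log (dvs n (i + 1)) with hGdef
  set Ln := Real.log n with hLndef
  have hLn0 : 0 ≤ Ln := Real.log_natCast_nonneg n
  have hdiv : ∀ i : ℕ, i < K → dvs n (i + 1) ∈ n.divisors := fun i hi =>
    dvs_mem_divisors n (by omega) (by omega)
  have hG0 : ∀ i : ℕ, i < K → 0 ≤ G i := by
    intro i hi
    have h1 : 1 ≤ dvs n (i + 1) := Nat.pos_of_mem_divisors (hdiv i hi)
    exact Real.log_nonneg (by exact_mod_cast h1)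
  have hGle : ∀ i : ℕ, i < K → G i ≤ Ln := by
    intro i hi
    have h1 : 0 < dvs n (i + 1) := Nat.pos_of_mem_divisors (hdiv i hi)
    have h2 : dvs n (i + 1) ≤ n := Nat.divisor_le (hdiv i hi)
    exact Real.log_le_log (by exact_mod_cast h1) (by exact_mod_cast h2)
  have hpair : ∀ i : ℕ, i < K → G i + G (K - 1 - i) = Ln := by
    intro i hi
    have hKi : K - 1 - i + 1 = K - i := by omega
    have hd2 : dvs n (K - i) ∈ n.divisors := dvs_mem_divisors n (by omega) (by omega)
    have hdvd : dvs n (K - i) ∣ n := (Nat.mem_divisors.mp hd2).1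
    have hmul : dvs n (i + 1) * dvs n (K - i) = n := by
      rw [dvs_pair n hn0 hi]
      exact Nat.div_mul_cancel hdvd
    have p1 : (0:ℝ) < (dvs n (i + 1) : ℝ) := by
      exact_mod_cast Nat.pos_of_mem_divisors (hdiv i hi)
    have p2 : (0:ℝ) < (dvs n (K - i) : ℝ) := by
      exact_mod_cast Nat.pos_of_mem_divisors hd2
    have hln : Ln = Real.log ((dvs n (i + 1) : ℝ) * (dvs n (K - i) : ℝ)) := by
      rw [hLndef]; congr 1; exact_mod_cast hmul.symm
    rw [hln, Real.log_mul (ne_of_gt p1) (ne_of_gt p2)]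
    simp only [hGdef, hKi]
  have hS : Sfun n = ∑ i ∈ Finset.range K, (i : ℝ) * G i := by
    rw [Sfun, ← Finset.Ico_add_one_right_eq_Icc, Finset.sum_Ico_eq_sum_range]
    refine Finset.sum_congr rfl fun i _ => ?_
    have h1i : 1 + i = i + 1 := by omega
    rw [h1i, hGdef]
    push_cast
    ring
  have hrefl : ∑ i ∈ Finset.range K, (i : ℝ) * G i
      = ∑ i ∈ Finset.range K, (((K : ℝ) - 1 - i) * (Ln - G i)) := by
    rw [← Finset.sum_range_reflect (fun i => (i : ℝ) * G i) K]
    refine Finset.sum_congr rfl fun i hi => ?_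
    have hiK : i < K := Finset.mem_range.mp hi
    have hc : ((K - 1 - i : ℕ) : ℝ) = (K : ℝ) - 1 - i := by
      push_cast [Nat.cast_sub (by omega : i ≤ K - 1), Nat.cast_sub (by omega : 1 ≤ K)]
      ring
    have hg : G (K - 1 - i) = Ln - G i := by linarith [hpair i hiK]
    simp only [hc, hg]
  have hA2 : 2 * (∑ i ∈ Finset.range K, (i : ℝ) * G i)
      = (∑ i ∈ Finset.range K, ((K : ℝ) - 1 - i)) * Ln
        + ∑ i ∈ Finset.range K, ((2 * (i : ℝ) + 1 - K) * G i) := by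
    calc 2 * (∑ i ∈ Finset.range K, (i : ℝ) * G i)
        = (∑ i ∈ Finset.range K, (((K : ℝ) - 1 - i) * (Ln - G i)))
          + ∑ i ∈ Finset.range K, (i : ℝ) * G i := by rw [← hrefl]; ring
      _ = ∑ i ∈ Finset.range K,
            ((((K : ℝ) - 1 - i) * Ln) + (2 * (i : ℝ) + 1 - K) * G i) := by
          rw [← Finset.sum_add_distrib]
          exact Finset.sum_congr rfl fun i _ => by ring
      _ = (∑ i ∈ Finset.range K, ((K : ℝ) - 1 - i)) * Ln
          + ∑ i ∈ Finset.range K, ((2 * (i : ℝ) + 1 - K) * G i) := by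
          rw [Finset.sum_add_distrib, Finset.sum_mul]
  have hbound : ∑ i ∈ Finset.range K, ((2 * (i : ℝ) + 1 - K) * G i)
      ≤ ∑ i ∈ Finset.range K, (((2 * i + 1 - K : ℕ) : ℝ) * Ln) := by
    refine Finset.sum_le_sum fun i hi => ?_
    have hiK : i < K := Finset.mem_range.mp hi
    rcases le_or_gt (2 * i + 1) K with h | h
    · have hz : 2 * i + 1 - K = 0 := by omega
      rw [hz]
      simp only [Nat.cast_zero, zero_mul]
      have hc : 2 * (i : ℝ) + 1 - K ≤ 0 := by
        have hh : (2 * i + 1 : ℝ) ≤ K := by exact_mod_cast h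
        push_cast at hh
        linarith
      exact mul_nonpos_of_nonpos_of_nonneg hc (hG0 i hiK)
    · have hc : ((2 * i + 1 - K : ℕ) : ℝ) = 2 * (i : ℝ) + 1 - K := by
        push_cast [Nat.cast_sub (by omega : K ≤ 2 * i + 1)]
        ring
      rw [hc]
      have hpos : 0 ≤ 2 * (i : ℝ) + 1 - K := by
        have hh : (K : ℝ) ≤ 2 * i + 1 := by exact_mod_cast h.le
        push_cast at hh
        linarith
      exact mul_le_mul_of_nonneg_left (hGle i hiK) hpos
  have hK1 : 1 ≤ K := by
    have h1 : 1 ∈ n.divisors := Nat.one_mem_divisors.mpr hn0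
    have h2 : 0 < n.divisors.card := Finset.card_pos.mpr ⟨1, h1⟩
    have h3 : K = n.divisors.card := rfl
    omega
  have hid : (∑ i ∈ Finset.range K, (i : ℝ)) = (K : ℝ) * ((K : ℝ) - 1) / 2 := by
    have h := congrArg (Nat.cast : ℕ → ℝ) (Finset.sum_range_id_mul_two K)
    push_cast [Nat.cast_sub hK1] at h
    linarith
  have hsum1 : ∑ i ∈ Finset.range K, ((K : ℝ) - 1 - i) = (K : ℝ) * ((K : ℝ) - 1) / 2 := by
    have h : ∑ i ∈ Finset.range K, ((K : ℝ) - 1 - i)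
        = (Finset.range K).card • ((K : ℝ) - 1) - ∑ i ∈ Finset.range K, (i : ℝ) := by
      rw [Finset.sum_sub_distrib, Finset.sum_const]
    rw [h, Finset.card_range, nsmul_eq_mul, hid]
    ring
  have hnat : ((∑ i ∈ Finset.range K, (2 * i + 1 - K) : ℕ) : ℝ) ≤ ((K : ℝ) ^ 2 + 2 * K) / 4 := by
    have h := (Nat.cast_le (α := ℝ)).mpr (aux_sum K)
    push_cast at h ⊢
    linarith
  have hsum2 : ∑ i ∈ Finset.range K, (((2 * i + 1 - K : ℕ) : ℝ) * Ln)
      ≤ (((K : ℝ) ^ 2 + 2 * K) / 4) * Ln := by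
    rw [← Finset.sum_mul]
    have h : ∑ i ∈ Finset.range K, ((2 * i + 1 - K : ℕ) : ℝ)
        = ((∑ i ∈ Finset.range K, (2 * i + 1 - K) : ℕ) : ℝ) := by
      push_cast
      rfl
    rw [h]
    exact mul_le_mul_of_nonneg_right hnat hLn0
  rw [hS]
  have hfin : 2 * (∑ i ∈ Finset.range K, (i : ℝ) * G i)
      ≤ (K : ℝ) * ((K : ℝ) - 1) / 2 * Ln + (((K : ℝ) ^ 2 + 2 * K) / 4) * Ln := by
    rw [hA2, hsum1]
    linarith [le_trans hbound hsum2]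
  have heq : (K : ℝ) * ((K : ℝ) - 1) / 2 * Ln + (((K : ℝ) ^ 2 + 2 * K) / 4) * Ln
      = 3 / 4 * (K : ℝ) ^ 2 * Ln := by ring
  linarith
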